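/- arXiv:1012.1125 — 3 statements merged into one kernel-verified Lean document; each statement's English description precedes it below -/
import Mathlib

section
/- Let η ∈ ℝⁿ with η ≠ 0, f ∈ ℝⁿ, x ∈ ℝ, and let γ be the standard Gaussian measure on ℝⁿ. Then (1/(2π)) ∫_ℝ ∫_{ℝⁿ} exp(i⟨f + λη, ω⟩ - iλx) dγ(ω) dλ = (2π‖η‖²)^{-1/2} · exp(-(i⟨η, f⟩ - x)²/(2‖η‖²) - ‖f‖²/2). -/
open Real Complex MeasureTheory ProbabilityTheory Matrix
open scoped ENNReal NNReal

lemma gauss1 (t : ℝ) :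
    ∫ ω : ℝ, Complex.exp ((t : ℂ) * ω * I) ∂(gaussianReal 0 1)
      = Complex.exp (-(t : ℂ) ^ 2 / 2) := by
  rw [gaussianReal_of_var_ne_zero 0 one_ne_zero]
  have hmeas : Measurable fun y : ℝ => (gaussianPDFReal 0 1 y).toNNReal :=
    (measurable_gaussianPDFReal 0 1).real_toNNReal
  have hwd : (volume.withDensity (gaussianPDF 0 1)) =
      volume.withDensity (fun y => ((gaussianPDFReal 0 1 y).toNNReal : ℝ≥0∞)) := rfl
  rw [hwd, integral_withDensity_eq_integral_smul hmeas]
  have h1 : ∀ y : ℝ, (gaussianPDFReal 0 1 y).toNNReal • Complex.exp ((t : ℂ) * y * I)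
      = ((Real.sqrt (2 * π) : ℝ) : ℂ)⁻¹ *
        Complex.exp ((-(1/2) : ℂ) * (y:ℂ) ^ 2 + ((t : ℂ) * I) * y + 0) := by
    intro y
    have hpdf : gaussianPDFReal 0 1 y = (Real.sqrt (2 * π))⁻¹ * Real.exp (-(1/2) * y ^ 2) := by
      simp only [gaussianPDFReal, NNReal.coe_one, mul_one, sub_zero]
      congr 1
      ring_nf
    rw [NNReal.smul_def, Real.coe_toNNReal _ (gaussianPDFReal_nonneg 0 1 y), hpdf,
      Complex.real_smul]
    push_cast
    rw [mul_assoc, ← Complex.exp_add]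
    congr 2
    ring
  simp_rw [h1]
  rw [integral_const_mul, integral_cexp_quadratic (by norm_num) ((t:ℂ)*I) 0]
  have h2 : ((π : ℂ) / -(-(1/2))) ^ (1/2 : ℂ) = ((Real.sqrt (2 * π) : ℝ) : ℂ) := by
    have h3 : ((π:ℂ) / -(-(1/2))) = ((2 * π : ℝ) : ℂ) := by push_cast; ring
    have h4 : ((2*π:ℝ):ℂ) ^ ((((1:ℝ)/2 : ℝ)) : ℂ) = (((2*π) ^ ((1:ℝ)/2) : ℝ) : ℂ) :=
      (Complex.ofReal_cpow (by positivity) _).symm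
    rw [h3, show ((1:ℂ)/2) = ((((1:ℝ)/2 : ℝ)) : ℂ) by norm_num, h4, Real.sqrt_eq_rpow]
  rw [h2, ← mul_assoc, inv_mul_cancel₀ (Complex.ofReal_ne_zero.mpr (by positivity)), one_mul]
  congr 1
  have hI : ((t:ℂ) * I) ^ 2 = -(t:ℂ)^2 := by
    rw [mul_pow, Complex.I_sq]; ring
  rw [hI]
  ring

theorem stmt_12 (n : ℕ) (η f : Fin n → ℝ) (hη : η ≠ 0) (x : ℝ)
    (γ : Measure (Fin n → ℝ))
    (hγ : γ = Measure.pi fun _ => gaussianReal 0 1) :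
    (1 / (2 * (π : ℂ))) *
        ∫ l : ℝ, ∫ ω : Fin n → ℝ,
          Complex.exp (I * (((f + l • η) ⬝ᵥ ω : ℝ) : ℂ) - I * l * x) ∂γ =
      (((Real.sqrt (2 * π * (η ⬝ᵥ η)))⁻¹ : ℝ) : ℂ) *
        Complex.exp (-(I * ((η ⬝ᵥ f : ℝ) : ℂ) - x) ^ 2 / (2 * ((η ⬝ᵥ η : ℝ) : ℂ))
          - ((f ⬝ᵥ f : ℝ) : ℂ) / 2) := by
  subst hγ
  have hs0 : 0 ≤ η ⬝ᵥ η := Finset.sum_nonneg fun i _ => mul_self_nonneg (η i)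
  have hs : 0 < η ⬝ᵥ η := by
    rcases lt_or_eq_of_le hs0 with h | h
    · exact h
    · exact absurd (dotProduct_self_eq_zero.mp h.symm) hη
  set s : ℝ := η ⬝ᵥ η with hs_def
  -- inner integral
  have hgauss : ∀ g : Fin n → ℝ,
      ∫ ω : Fin n → ℝ, Complex.exp (I * ((g ⬝ᵥ ω : ℝ) : ℂ))
        ∂(Measure.pi fun _ => gaussianReal 0 1)
      = Complex.exp (-((g ⬝ᵥ g : ℝ) : ℂ) / 2) := by
    intro g
    have h1 : ∀ ω : Fin n → ℝ, Complex.exp (I * ((g ⬝ᵥ ω : ℝ) : ℂ))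
        = ∏ j, Complex.exp ((g j : ℂ) * (ω j : ℂ) * I) := by
      intro ω
      rw [← Complex.exp_sum]
      congr 1
      simp only [dotProduct]
      push_cast
      rw [Finset.mul_sum]
      exact Finset.sum_congr rfl fun j _ => by ring
    simp_rw [h1]
    have hprod : ∫ ω : Fin n → ℝ, ∏ j, Complex.exp ((g j : ℂ) * (ω j : ℂ) * I)
        ∂(Measure.pi fun _ => gaussianReal 0 1)
        = ∏ j, ∫ v : ℝ, Complex.exp ((g j : ℂ) * (v : ℂ) * I) ∂(gaussianReal 0 1) := by
      letI : MeasureSpace ℝ := ⟨gaussianReal 0 1⟩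
      haveI : SigmaFinite (volume : Measure ℝ) :=
        inferInstanceAs (SigmaFinite (gaussianReal 0 1))
      exact MeasureTheory.integral_fintype_prod_eq_prod (ι := Fin n)
        (fun j (v : ℝ) => Complex.exp ((g j : ℂ) * (v : ℂ) * I))
    rw [hprod]
    simp_rw [gauss1]
    rw [← Complex.exp_sum]
    congr 1
    simp only [dotProduct]
    push_cast
    rw [← Finset.sum_div, ← Finset.sum_neg_distrib]
    congr 1
    exact Finset.sum_congr rfl fun j _ => by ring
  have hinner : ∀ l : ℝ,
      (∫ ω : Fin n → ℝ, Complex.exp (I * (((f + l • η) ⬝ᵥ ω : ℝ) : ℂ) - I * l * x)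
        ∂(Measure.pi fun _ => gaussianReal 0 1))
      = Complex.exp ((-(s : ℂ)/2) * l ^ 2 + (-((f ⬝ᵥ η : ℝ) : ℂ) - I * x) * l
          + (-((f ⬝ᵥ f : ℝ) : ℂ)/2)) := by
    intro l
    have h2 : ∀ ω : Fin n → ℝ,
        Complex.exp (I * (((f + l • η) ⬝ᵥ ω : ℝ) : ℂ) - I * l * x)
        = Complex.exp (I * (((f + l • η) ⬝ᵥ ω : ℝ) : ℂ)) * Complex.exp (-(I * l * x)) := by
      intro ω; rw [sub_eq_add_neg, Complex.exp_add]
    simp_rw [h2]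
    rw [integral_mul_const, hgauss (f + l • η), ← Complex.exp_add]
    congr 1
    have hexp : (f + l • η) ⬝ᵥ (f + l • η)
        = f ⬝ᵥ f + 2 * l * (f ⬝ᵥ η) + l ^ 2 * s := by
      simp only [add_dotProduct, dotProduct_add, smul_dotProduct,
        dotProduct_smul, smul_eq_mul, hs_def, dotProduct_comm η f]
      ring
    rw [hexp]
    push_cast
    ring
  simp_rw [hinner]
  have hb : (-(s:ℂ)/2).re < 0 := by
    simp only [div_ofNat_re, neg_re, ofReal_re]
    linarith
  rw [integral_cexp_quadratic hb]
  have hconst : (1 / (2 * (π:ℂ))) * ((↑π / -(-(s:ℂ)/2)) ^ (1/2 : ℂ))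
      = (((Real.sqrt (2 * π * s))⁻¹ : ℝ) : ℂ) := by
    have h3 : ((π:ℂ) / -(-(s:ℂ)/2)) = ((2 * π / s : ℝ) : ℂ) := by
      push_cast
      field_simp
    have h4 : ((2*π/s:ℝ):ℂ) ^ ((((1:ℝ)/2 : ℝ)) : ℂ) = (((2*π/s) ^ ((1:ℝ)/2) : ℝ) : ℂ) :=
      (Complex.ofReal_cpow (by positivity) _).symm
    rw [h3, show ((1:ℂ)/2) = ((((1:ℝ)/2 : ℝ)) : ℂ) by norm_num, h4, ← Real.sqrt_eq_rpow]
    have h5 : Real.sqrt (2*π/s) = Real.sqrt (2*π*s) / s := by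
      rw [show 2*π/s = (2*π*s)/s^2 by field_simp,
        Real.sqrt_div (by positivity) (s^2), Real.sqrt_sq hs.le]
    have h6 : (1/(2*π)) * Real.sqrt (2*π/s) = (Real.sqrt (2*π*s))⁻¹ := by
      rw [h5]
      have h7 : Real.sqrt (2*π*s) * Real.sqrt (2*π*s) = 2*π*s :=
        Real.mul_self_sqrt (by positivity)
      have h8 : Real.sqrt (2*π*s) ≠ 0 := by positivity
      have h9 : s ≠ 0 := hs.ne'
      have hπ : (π:ℝ) ≠ 0 := Real.pi_ne_zero
      set r := Real.sqrt (2*π*s) with hr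
      field_simp
      linear_combination h7
    calc (1 / (2 * (π:ℂ))) * ((Real.sqrt (2*π/s) : ℝ) : ℂ)
        = (((1/(2*π)) * Real.sqrt (2*π/s) : ℝ) : ℂ) := by push_cast; ring
      _ = _ := by rw [h6]
  rw [← mul_assoc, hconst]
  congr 1
  have hI2 : (I:ℂ)^2 = -1 := Complex.I_sq
  have hsne : ((s:ℝ):ℂ) ≠ 0 := Complex.ofReal_ne_zero.mpr hs.ne'
  rw [dotProduct_comm η f]
  congr 1
  linear_combination ((((f ⬝ᵥ η : ℝ):ℂ))^2 + (x:ℂ)^2)/(2*(s:ℂ)) * hI2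
end

section
/- Let k > 0, y ∈ ℝ and 0 < t < π/(2√k). The function K(y, t) = (√k/(2πi·sin(√k·t)))^{1/2} · exp(i·√k·y²/(2·tan(√k·t))) (principal branch of the square root) satisfies the harmonic oscillator Schrödinger equation i ∂K/∂t = -(1/2) ∂²K/∂y² + (k/2)·y²·K. -/
open Real Complex

theorem stmt_15 (k : ℝ) (hk : 0 < k) (K : ℝ → ℝ → ℂ)
    (hK : ∀ y t : ℝ, K y t =
      (((Real.sqrt k : ℝ) : ℂ) / (2 * (π : ℂ) * I * ((Real.sin (Real.sqrt k * t) : ℝ) : ℂ)))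
          ^ ((1/2) : ℂ) *
        Complex.exp (I * ((Real.sqrt k : ℝ) : ℂ) * (y : ℂ) ^ 2 /
          (2 * ((Real.tan (Real.sqrt k * t) : ℝ) : ℂ)))) :
    ∀ (y t : ℝ), 0 < t → t < π / (2 * Real.sqrt k) →
      I * deriv (fun τ : ℝ => K y τ) t =
        -(1/2) * deriv (fun z : ℝ => deriv (fun w : ℝ => K w t) z) y
          + (k/2) * (y : ℂ) ^ 2 * K y t := by
  intro y t ht0 ht1
  set ω := Real.sqrt k with hωdef
  have hω : 0 < ω := Real.sqrt_pos.mpr hk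
  have hk2 : ω ^ 2 = k := Real.sq_sqrt hk.le
  have hωt0 : 0 < ω * t := by positivity
  have hωt1 : ω * t < π / 2 := by
    have h := (lt_div_iff₀ (by positivity : (0:ℝ) < 2*ω)).mp ht1
    nlinarith
  have hs : 0 < Real.sin (ω * t) :=
    Real.sin_pos_of_pos_of_lt_pi hωt0 (by linarith [Real.pi_pos])
  have hc : 0 < Real.cos (ω * t) :=
    Real.cos_pos_of_mem_Ioo ⟨by linarith, hωt1⟩
  have htan : Real.tan (ω * t) = Real.sin (ω * t) / Real.cos (ω * t) := Real.tan_eq_sin_div_cos _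
  have htanpos : 0 < Real.tan (ω * t) := by rw [htan]; positivity
  set s := Real.sin (ω * t) with hsdef
  set c := Real.cos (ω * t) with hcdef
  set T := Real.tan (ω * t) with hTdef
  -- complex nonvanishing facts
  have hπ : (0:ℝ) < π := Real.pi_pos
  have hsC : ((s:ℝ):ℂ) ≠ 0 := by exact_mod_cast hs.ne'
  have hcC : ((c:ℝ):ℂ) ≠ 0 := by exact_mod_cast hc.ne'
  have hTC : ((T:ℝ):ℂ) ≠ 0 := by exact_mod_cast htanpos.ne'
  have hπC : ((π:ℝ):ℂ) ≠ 0 := by exact_mod_cast hπ.ne'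
  have hωC : ((ω:ℝ):ℂ) ≠ 0 := by exact_mod_cast hω.ne'
  have hden_ne : (2 * (π:ℂ) * I * (s:ℂ)) ≠ 0 := by
    simp [hπC, hsC, Complex.I_ne_zero]
  have hTden : (2 * ((T:ℝ):ℂ)) ≠ 0 := by simp [hTC]
  -- the base of the cpow
  set G : ℂ := (ω:ℂ) / (2 * (π:ℂ) * I * (s:ℂ)) with hGdef
  have hGne : G ≠ 0 := div_ne_zero hωC hden_ne
  have hGform : G = ((-(ω/(2*π*s)) : ℝ):ℂ) * I := by
    rw [hGdef, div_eq_iff hden_ne]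
    have hsr : (s:ℝ) ≠ 0 := hs.ne'
    have hpr : (2*π*s : ℝ) ≠ 0 := by positivity
    push_cast
    field_simp
    linear_combination Complex.I_sq
  have hGslit : G ∈ Complex.slitPlane := by
    rw [Complex.mem_slitPlane_iff]
    right
    rw [hGform]
    rw [Complex.mul_I_im]
    simp only [Complex.ofReal_re]
    have : 0 < ω/(2*π*s) := by positivity
    linarith
  set A : ℂ := G ^ ((1/2 : ℂ)) with hAdef
  have hAne : A ≠ 0 := by
    rw [hAdef, Ne, Complex.cpow_eq_zero_iff]
    simp [hGne]
  have hA2 : A * A = G := by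
    rw [hAdef, ← Complex.cpow_add _ _ hGne]
    norm_num
  set B : ℂ := I * (ω:ℂ) / (2 * ((T:ℝ):ℂ)) with hBdef
  set E : ℂ := Complex.exp (I * (ω:ℂ) * (y:ℂ)^2 / (2 * ((T:ℝ):ℂ))) with hEdef
  have hEne : E ≠ 0 := Complex.exp_ne_zero _
  -- spatial derivative
  have hbase : ∀ z : ℝ, HasDerivAt (fun w : ℝ => A * Complex.exp (B * ((w^2 : ℝ):ℂ)))
      (A * Complex.exp (B * ((z^2 : ℝ):ℂ)) * (2*B*(z:ℂ))) z := by
    intro z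
    have h1 := (((hasDerivAt_pow 2 z).ofReal_comp).const_mul B).cexp.const_mul A
    convert h1 using 1
    · rfl
    push_cast
    ring
  have hfun : (fun w : ℝ => K w t) = fun w : ℝ => A * Complex.exp (B * ((w^2 : ℝ):ℂ)) := by
    funext w
    rw [hK w t]
    congr 1
    rw [hBdef, Complex.ofReal_pow, hTdef]
    ring
  have hd1 : (fun z : ℝ => deriv (fun w : ℝ => K w t) z)
      = fun z : ℝ => A * Complex.exp (B * ((z^2 : ℝ):ℂ)) * (2*B*(z:ℂ)) := by
    funext z
    rw [hfun]
    exact (hbase z).deriv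
  have hlin : HasDerivAt (fun z : ℝ => 2*B*(z:ℂ)) (2*B) y := by
    simpa using ((hasDerivAt_id y).ofReal_comp).const_mul (2*B)
  have hsecond : HasDerivAt (fun z : ℝ => A * Complex.exp (B * ((z^2 : ℝ):ℂ)) * (2*B*(z:ℂ)))
      (A * Complex.exp (B * ((y^2 : ℝ):ℂ)) * (2*B*(y:ℂ)) * (2*B*(y:ℂ))
        + A * Complex.exp (B * ((y^2 : ℝ):ℂ)) * (2*B)) y := by
    have h := (hbase y).mul hlin
    convert h using 1
    all_goals rfl
  -- time derivative
  have hsinD : HasDerivAt (fun τ : ℝ => Real.sin (ω * τ)) (c * ω) t := by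
    have h := (Real.hasDerivAt_sin (ω*t)).comp t ((hasDerivAt_id t).const_mul ω)
    simpa [Function.comp_def] using h
  have hdenD : HasDerivAt (fun τ : ℝ => 2*(π:ℂ)*I*((Real.sin (ω*τ) : ℝ):ℂ))
      (2*(π:ℂ)*I*((c*ω : ℝ):ℂ)) t := (hsinD.ofReal_comp).const_mul _
  have hGD : HasDerivAt (fun τ : ℝ => ((ω:ℝ):ℂ)/(2*(π:ℂ)*I*((Real.sin (ω*τ) : ℝ):ℂ)))
      ((0 * (2*(π:ℂ)*I*((s:ℝ):ℂ)) - ((ω:ℝ):ℂ) * (2*(π:ℂ)*I*((c*ω : ℝ):ℂ)))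
        / (2*(π:ℂ)*I*((s:ℝ):ℂ))^2) t :=
    (hasDerivAt_const t ((ω:ℝ):ℂ)).div hdenD hden_ne
  have hAD : HasDerivAt (fun τ : ℝ => (((ω:ℝ):ℂ)/(2*(π:ℂ)*I*((Real.sin (ω*τ) : ℝ):ℂ))) ^ ((1/2 : ℂ)))
      ((1/2 : ℂ) * G ^ ((1/2 : ℂ) - 1) *
        ((0 * (2*(π:ℂ)*I*((s:ℝ):ℂ)) - ((ω:ℝ):ℂ) * (2*(π:ℂ)*I*((c*ω : ℝ):ℂ)))
          / (2*(π:ℂ)*I*((s:ℝ):ℂ))^2)) t := by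
    have h := ((Complex.hasStrictDerivAt_cpow_const (c := (1/2 : ℂ)) hGslit).hasDerivAt).comp t hGD
    exact h
  have htanD : HasDerivAt (fun τ : ℝ => Real.tan (ω * τ)) ((1/c^2) * ω) t := by
    have h := (Real.hasDerivAt_tan (x := ω*t) hc.ne').comp t ((hasDerivAt_id t).const_mul ω)
    simpa [Function.comp_def] using h
  have hTdenD : HasDerivAt (fun τ : ℝ => 2*((Real.tan (ω*τ) : ℝ):ℂ))
      (2*(((1/c^2) * ω : ℝ):ℂ)) t := (htanD.ofReal_comp).const_mul _
  have hargD : HasDerivAt (fun τ : ℝ => I*((ω:ℝ):ℂ)*(y:ℂ)^2/(2*((Real.tan (ω*τ) : ℝ):ℂ)))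
      ((0 * (2*((T:ℝ):ℂ)) - (I*((ω:ℝ):ℂ)*(y:ℂ)^2) * (2*(((1/c^2) * ω : ℝ):ℂ)))
        / (2*((T:ℝ):ℂ))^2) t :=
    (hasDerivAt_const t (I*((ω:ℝ):ℂ)*(y:ℂ)^2)).div hTdenD hTden
  have hexpD := hargD.cexp
  have htimeD : HasDerivAt (fun τ : ℝ => K y τ)
      ((1/2 : ℂ) * G ^ ((1/2 : ℂ) - 1) *
        ((0 * (2*(π:ℂ)*I*((s:ℝ):ℂ)) - ((ω:ℝ):ℂ) * (2*(π:ℂ)*I*((c*ω : ℝ):ℂ)))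
          / (2*(π:ℂ)*I*((s:ℝ):ℂ))^2) * E
       + A * (E * ((0 * (2*((T:ℝ):ℂ)) - (I*((ω:ℝ):ℂ)*(y:ℂ)^2) * (2*(((1/c^2) * ω : ℝ):ℂ)))
          / (2*((T:ℝ):ℂ))^2))) t := by
    have h1 : (fun τ : ℝ => K y τ) = fun τ : ℝ =>
        (((ω:ℝ):ℂ)/(2*(π:ℂ)*I*((Real.sin (ω*τ) : ℝ):ℂ))) ^ ((1/2 : ℂ)) *
          Complex.exp (I*((ω:ℝ):ℂ)*(y:ℂ)^2/(2*((Real.tan (ω*τ) : ℝ):ℂ))) :=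
      funext fun τ => hK y τ
    rw [h1]
    exact hAD.mul hexpD
  -- assemble
  have hE2 : Complex.exp (B * ((y^2 : ℝ):ℂ)) = E := by
    rw [hEdef, hBdef]
    congr 1
    rw [Complex.ofReal_pow]
    ring
  have hGhalf : G ^ ((1/2 : ℂ) - 1) = A⁻¹ := by
    have h : ((1/2 : ℂ) - 1) = -(1/2 : ℂ) := by norm_num
    rw [h, Complex.cpow_neg, ← hAdef]
  have hKyt : K y t = A * E := by rw [hK y t]
  rw [htimeD.deriv, hd1, hsecond.deriv, hKyt, hE2, hGhalf]
  have hTC2 : ((T:ℝ):ℂ) = (s:ℂ)/(c:ℂ) := by rw [htan]; push_cast; ring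
  have hkC : ((ω:ℝ):ℂ)^2 = (k:ℂ) := by exact_mod_cast hk2
  have hsc : ((s:ℝ):ℂ)^2 + ((c:ℝ):ℂ)^2 = 1 := by
    have h := Real.sin_sq_add_cos_sq (ω*t)
    exact_mod_cast h
  rw [hBdef, hTC2]
  have hA2' : A^2 * (2*(π:ℂ)*I*((s:ℝ):ℂ)) = ((ω:ℝ):ℂ) := by
    rw [sq, hA2, hGdef]
    field_simp
  have hAinv : A⁻¹ = A * (2*(π:ℂ)*I*((s:ℝ):ℂ)) / ((ω:ℝ):ℂ) := by
    rw [eq_div_iff hωC, ← hA2']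
    field_simp
  rw [hAinv, ← hkC]
  push_cast
  field_simp
  ring_nf
  simp only [Complex.I_sq]
  ring_nf
  linear_combination (-(((ω:ℝ):ℂ)^3*((y:ℝ):ℂ)^2)) * hsc
end

section
/- Let k > 0 and 0 < t < π/(2√k). Then ∏_{n=1}^∞ (1 - k·(t/((n-1/2)π))²) = cos(√k·t), and in particular this product is strictly positive, so det(Id + L(Id+K)⁻¹) = cos(√k·t) ≠ 0. -/
set_option maxHeartbeats 1000000

open Real Filter Finset

theorem aux_cos_prod (x : ℝ) (hx0 : 0 < x) (hx : x < π / 2) :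
    HasProd (fun n : ℕ => 1 - x ^ 2 / (((n : ℝ) + 1/2) ^ 2 * π ^ 2)) (Real.cos x) := by
  have hπ : (0:ℝ) < π := Real.pi_pos
  have hπ' : (π:ℝ) ≠ 0 := hπ.ne'
  set F : ℕ → ℝ := fun n => 1 - x ^ 2 / (((n : ℝ) + 1/2) ^ 2 * π ^ 2) with hF
  have hx2 : x ^ 2 < π ^ 2 / 4 := by
    have := sq_lt_sq' (by linarith : -(π/2) < x) hx
    nlinarith
  have hden : ∀ n : ℕ, (π ^ 2)/4 ≤ ((n : ℝ) + 1/2) ^ 2 * π ^ 2 := by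
    intro n
    have hn0 : (0:ℝ) ≤ (n:ℝ) := Nat.cast_nonneg n
    have h2 : ((1:ℝ)/2)^2 ≤ ((n:ℝ) + 1/2)^2 := by nlinarith
    nlinarith [sq_nonneg π]
  have hdpos : ∀ n : ℕ, (0:ℝ) < ((n : ℝ) + 1/2) ^ 2 * π ^ 2 := by
    intro n; positivity
  have hFpos : ∀ n : ℕ, 0 < F n := by
    intro n
    have h1 : x ^ 2 / (((n : ℝ) + 1/2) ^ 2 * π ^ 2) < 1 := by
      rw [div_lt_one (hdpos n)]
      calc x ^ 2 < π ^ 2 / 4 := hx2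
        _ ≤ _ := hden n
    simp only [hF]; linarith
  have hFle : ∀ n : ℕ, F n ≤ 1 := by
    intro n
    have : 0 ≤ x ^ 2 / (((n : ℝ) + 1/2) ^ 2 * π ^ 2) := by positivity
    simp only [hF]; linarith
  have hF0le : ∀ n : ℕ, F 0 ≤ F n := by
    intro n
    have h : x ^ 2 / (((n : ℝ) + 1/2) ^ 2 * π ^ 2) ≤ x ^ 2 / (((0 : ℝ) + 1/2) ^ 2 * π ^ 2) := by
      apply div_le_div_of_nonneg_left (by positivity) (by positivity)
      have hn0 : (0:ℝ) ≤ (n:ℝ) := Nat.cast_nonneg n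
      have : ((0:ℝ) + 1/2) ^ 2 ≤ ((n : ℝ) + 1/2) ^ 2 := by nlinarith
      nlinarith [sq_nonneg π]
    simp only [hF]; push_cast; linarith [h]
  have hsum : Summable (fun n : ℕ => Real.log (F n)) := by
    rw [← summable_neg_iff]
    have hnn : ∀ n : ℕ, 0 ≤ -Real.log (F n) := by
      intro n
      have := Real.log_nonpos (le_of_lt (hFpos n)) (hFle n)
      linarith
    have hbound : ∀ n : ℕ, -Real.log (F n)
        ≤ (4 * x ^ 2 / (π ^ 2 * F 0)) * (1 / ((n:ℝ) + 1) ^ 2) := by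
      intro n
      have h1 : -Real.log (F n) = Real.log (F n)⁻¹ := by rw [Real.log_inv]
      have h2 : Real.log (F n)⁻¹ ≤ (F n)⁻¹ - 1 :=
        Real.log_le_sub_one_of_pos (inv_pos.2 (hFpos n))
      have h3 : (F n)⁻¹ - 1 = (1 - F n) / F n := by
        field_simp [(hFpos n).ne']
      have h4 : (1 - F n) / F n ≤ (1 - F n) / F 0 := by
        apply div_le_div_of_nonneg_left _ (hFpos 0) (hF0le n)
        · linarith [hFle n]
      have h5 : 1 - F n = x ^ 2 / (((n : ℝ) + 1/2) ^ 2 * π ^ 2) := by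
        simp [hF]
      have h6 : x ^ 2 / (((n : ℝ) + 1/2) ^ 2 * π ^ 2) ≤ 4 * x ^ 2 / (π ^ 2 * ((n:ℝ)+1)^2) := by
        rw [div_le_div_iff₀ (hdpos n) (by positivity)]
        have hn0 : (0:ℝ) ≤ (n:ℝ) := Nat.cast_nonneg n
        have h : ((n:ℝ)+1) ^ 2 ≤ 4 * ((n : ℝ) + 1/2) ^ 2 := by nlinarith
        have := mul_le_mul_of_nonneg_left h (show (0:ℝ) ≤ x^2*π^2 by positivity)
        nlinarith
      have h7 : 4 * x ^ 2 / (π ^ 2 * ((n:ℝ)+1)^2) / F 0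
          = (4 * x ^ 2 / (π ^ 2 * F 0)) * (1 / ((n:ℝ) + 1) ^ 2) := by
        field_simp
      calc -Real.log (F n) = Real.log (F n)⁻¹ := h1
        _ ≤ (F n)⁻¹ - 1 := h2
        _ = (1 - F n) / F n := h3
        _ ≤ (1 - F n) / F 0 := h4
        _ = x ^ 2 / (((n : ℝ) + 1/2) ^ 2 * π ^ 2) / F 0 := by rw [h5]
        _ ≤ 4 * x ^ 2 / (π ^ 2 * ((n:ℝ)+1)^2) / F 0 :=
            div_le_div_of_nonneg_right h6 (hFpos 0).le
        _ = _ := h7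
    have hs : Summable (fun n : ℕ => (4 * x ^ 2 / (π ^ 2 * F 0)) * (1 / ((n:ℝ) + 1) ^ 2)) := by
      apply Summable.mul_left
      have := (summable_nat_add_iff (f := fun n : ℕ => 1 / ((n:ℝ)) ^ 2) 1).2
        (Real.summable_one_div_nat_pow.2 one_lt_two)
      exact this.congr (fun n => by push_cast; ring)
    exact Summable.of_nonneg_of_le hnn hbound hs
  have hp : HasProd F (Real.exp (∑' n, Real.log (F n))) :=
    hsum.hasSum.rexp.congr_fun (fun n => (Real.exp_log (hFpos n)).symm)
  set P := Real.exp (∑' n, Real.log (F n)) with hP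
  have htend : Tendsto (fun N => ∏ i ∈ Finset.range N, F i) atTop (nhds P) :=
    hp.tendsto_prod_nat
  set H : ℕ → ℝ := fun j => 1 - (x/π) ^ 2 / ((j : ℝ) + 1) ^ 2 with hH
  set G : ℕ → ℝ := fun j => 1 - (2*x/π) ^ 2 / ((j : ℝ) + 1) ^ 2 with hG
  have key : ∀ N : ℕ, ∏ j ∈ Finset.range (2 * N), G j
      = (∏ i ∈ Finset.range N, F i) * ∏ j ∈ Finset.range N, H j := by
    intro N
    induction N with
    | zero => simp
    | succ N ih =>
      have h2 : 2 * (N + 1) = (2 * N) + 1 + 1 := by ring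
      rw [h2, Finset.prod_range_succ, Finset.prod_range_succ,
        Finset.prod_range_succ, Finset.prod_range_succ, ih]
      have hN0 : (0:ℝ) ≤ (N:ℝ) := Nat.cast_nonneg N
      have hne1 : (2*(N:ℝ) + 1) ≠ 0 := by positivity
      have hne2 : ((N:ℝ) + 1/2) ≠ 0 := by positivity
      have hne3 : (2*(N:ℝ) + 1 + 1) ≠ 0 := by positivity
      have hne4 : ((N:ℝ) + 1) ≠ 0 := by positivity
      have e1 : G (2 * N) = F N := by
        simp only [hG, hF]
        push_cast
        congr 1
        field_simp
      have e2 : G (2 * N + 1) = H N := by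
        simp only [hG, hH]
        push_cast
        congr 1
        field_simp
        ring
      rw [e1, e2]; ring
  have hHpos : ∀ j : ℕ, 0 < H j := by
    intro j
    have h1 : (x/π) ^ 2 < 1 := by
      rw [div_pow, div_lt_one (by positivity)]
      nlinarith
    have h2 : (x/π) ^ 2 / ((j : ℝ) + 1) ^ 2 < 1 := by
      have hj0 : (0:ℝ) ≤ (j:ℝ) := Nat.cast_nonneg j
      have : (1:ℝ) ≤ ((j:ℝ)+1)^2 := by nlinarith
      rw [div_lt_one (by positivity)]
      calc (x/π) ^ 2 < 1 := h1
        _ ≤ _ := this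
    simp only [hH]; linarith
  have hdenpos : ∀ N : ℕ, 0 < 2 * (x * ∏ j ∈ Finset.range N, H j) := by
    intro N
    have h := Finset.prod_pos (fun j (_ : j ∈ Finset.range N) => hHpos j)
    positivity
  have hSN : ∀ N : ℕ, ∏ i ∈ Finset.range N, F i
      = ((2*x) * ∏ j ∈ Finset.range (2*N), G j) / (2 * (x * ∏ j ∈ Finset.range N, H j)) := by
    intro N
    rw [eq_div_iff (hdenpos N).ne', key N]
    ring
  have h2N : Tendsto (fun N : ℕ => 2 * N) atTop atTop :=
    tendsto_atTop_atTop_of_monotone (fun a b h => by omega) (fun b => ⟨b, by omega⟩)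
  have hnum : Tendsto (fun N : ℕ => (2*x) * ∏ j ∈ Finset.range (2*N), G j) atTop
      (nhds (Real.sin (2*x))) := by
    have h := Real.tendsto_euler_sin_prod (2*x/π)
    have hπx : π * (2*x/π) = 2*x := by field_simp
    rw [hπx] at h
    exact h.comp h2N
  have hdent : Tendsto (fun N : ℕ => 2 * (x * ∏ j ∈ Finset.range N, H j)) atTop
      (nhds (2 * Real.sin x)) := by
    have h := Real.tendsto_euler_sin_prod (x/π)
    have hπx : π * (x/π) = x := by field_simp
    rw [hπx] at h
    exact h.const_mul 2
  have hsinx : Real.sin x ≠ 0 :=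
    (Real.sin_pos_of_pos_of_lt_pi hx0 (by linarith)).ne'
  have htend2 : Tendsto (fun N => ∏ i ∈ Finset.range N, F i) atTop
      (nhds (Real.sin (2*x) / (2 * Real.sin x))) := by
    have := hnum.div hdent (mul_ne_zero two_ne_zero hsinx)
    exact this.congr (fun N => (hSN N).symm)
  have hval : Real.sin (2*x) / (2 * Real.sin x) = Real.cos x := by
    rw [Real.sin_two_mul]
    field_simp
  rw [hval] at htend2
  have : P = Real.cos x := tendsto_nhds_unique htend htend2
  rwa [this] at hp

theorem stmt_16 (k t : ℝ) (hk : 0 < k) (ht : 0 < t)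
    (ht' : t < π / (2 * Real.sqrt k)) :
    HasProd (fun n : ℕ => 1 - k * (t / ((((n : ℝ) + 1) - 1/2) * π)) ^ 2)
        (Real.cos (Real.sqrt k * t)) ∧
      0 < Real.cos (Real.sqrt k * t) ∧ Real.cos (Real.sqrt k * t) ≠ 0 := by
  have hπ : (0:ℝ) < π := Real.pi_pos
  have hπ' : (π:ℝ) ≠ 0 := hπ.ne'
  have hsk : 0 < Real.sqrt k := Real.sqrt_pos.2 hk
  set x := Real.sqrt k * t with hxdef
  have hx0 : 0 < x := mul_pos hsk ht
  have hx : x < π / 2 := by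
    have h := (mul_lt_mul_iff_right₀ hsk).2 ht'
    calc x < Real.sqrt k * (π / (2 * Real.sqrt k)) := h
      _ = π / 2 := by field_simp
  have hp := aux_cos_prod x hx0 hx
  have heq : (fun n : ℕ => 1 - k * (t / ((((n : ℝ) + 1) - 1/2) * π)) ^ 2)
      = fun n : ℕ => 1 - x ^ 2 / (((n : ℝ) + 1/2) ^ 2 * π ^ 2) := by
    funext n
    have hn0 : (0:ℝ) ≤ (n:ℝ) := Nat.cast_nonneg n
    have hx2 : x ^ 2 = k * t ^ 2 := by
      rw [hxdef, mul_pow, Real.sq_sqrt hk.le]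
    have h : ((n:ℝ) + 1) - 1/2 = (n:ℝ) + 1/2 := by ring
    rw [h, hx2, div_pow, mul_pow]
    ring
  rw [heq]
  have hcos : 0 < Real.cos x :=
    Real.cos_pos_of_mem_Ioo ⟨by linarith, hx⟩
  exact ⟨hp, hcos, hcos.ne'⟩
end
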